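/- Let ρ ⊴ ρ' be runs of a d-VASS V with src(ρ') = src(ρ) and trg(ρ') = trg(ρ) + δ for some δ ∈ ℕ^d. Then for every n ∈ ℕ there exists a run ρ_n of V with src(ρ_n) = src(ρ) and trg(ρ_n) = trg(ρ) + n·δ. -/

import Mathlib

/-- A configuration of a `d`-VASS with states `Q`. -/
abbrev Conf (Q : Type) (d : ℕ) := Q × (Fin d → ℕ)

/-- A transition of a `d`-VASS with states `Q`. -/
abbrev VTrans (Q : Type) (d : ℕ) := Q × (Fin d → ℤ) × Q

/-- An anchored transition: a transition together with its source and target configurations. -/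
abbrev AncTrans (Q : Type) (d : ℕ) := Conf Q d × VTrans Q d × Conf Q d

/-- Validity of an anchored transition with respect to the transition set `T`. -/
def ValidAnc {Q : Type} {d : ℕ} (T : Set (VTrans Q d)) (m : AncTrans Q d) : Prop :=
  m.2.1 ∈ T ∧ m.1.1 = m.2.1.1 ∧ m.2.2.1 = m.2.1.2.2 ∧
  ∀ i, (m.2.2.2 i : ℤ) = (m.1.2 i : ℤ) + m.2.1.2.1 i

/-- A run: a nonempty sequence of consecutive valid anchored transitions. -/
structure Run (Q : Type) (d : ℕ) (T : Set (VTrans Q d)) where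
  len : ℕ
  pos : 0 < len
  m : Fin len → AncTrans Q d
  valid : ∀ i, ValidAnc T (m i)
  chain : ∀ (i : Fin len) (h : i.1 + 1 < len), (m i).2.2 = (m ⟨i.1 + 1, h⟩).1

/-- The source configuration of a run. -/
def Run.src {Q : Type} {d : ℕ} {T : Set (VTrans Q d)} (ρ : Run Q d T) : Conf Q d :=
  (ρ.m ⟨0, ρ.pos⟩).1

/-- The target configuration of a run. -/
def Run.trg {Q : Type} {d : ℕ} {T : Set (VTrans Q d)} (ρ : Run Q d T) : Conf Q d :=
  (ρ.m ⟨ρ.len - 1, by have := ρ.pos; omega⟩).2.2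

/-- Componentwise order on configurations (equal states). -/
def ConfLe {Q : Type} {d : ℕ} (c c' : Conf Q d) : Prop := c.1 = c'.1 ∧ c.2 ≤ c'.2

/-- Domination order on anchored transitions: equal transitions, dominated configurations. -/
def AncLe {Q : Type} {d : ℕ} (m m' : AncTrans Q d) : Prop :=
  m.2.1 = m'.2.1 ∧ ConfLe m.1 m'.1 ∧ ConfLe m.2.2 m'.2.2

/-- The embedding order `⊴` on runs: the anchored transitions of `ρ` embed into those
of `ρ'`, with the last anchored transition of `ρ` matched to the last one of `ρ'`. -/
def RunEmbed {Q : Type} {d : ℕ} {T : Set (VTrans Q d)} (ρ ρ' : Run Q d T) : Prop :=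
  ∃ f : Fin ρ.len → Fin ρ'.len, StrictMono f ∧
    (f ⟨ρ.len - 1, by have := ρ.pos; omega⟩).1 = ρ'.len - 1 ∧
    ∀ j, AncLe (ρ.m j) (ρ'.m (f j))

/-- The variant `⊴'` of the embedding order matching the first anchored transitions. -/
def RunEmbed' {Q : Type} {d : ℕ} {T : Set (VTrans Q d)} (ρ ρ' : Run Q d T) : Prop :=
  ∃ f : Fin ρ.len → Fin ρ'.len, StrictMono f ∧
    (f ⟨0, ρ.pos⟩).1 = 0 ∧
    ∀ j, AncLe (ρ.m j) (ρ'.m (f j))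

/-- One step of a VASS with transition set `T`. -/
def Step {Q : Type} {d : ℕ} (T : Set (VTrans Q d)) (c c' : Conf Q d) : Prop :=
  ∃ t ∈ T, c.1 = t.1 ∧ c'.1 = t.2.2 ∧ ∀ i, (c'.2 i : ℤ) = (c.2 i : ℤ) + t.2.1 i

/-- Reachability in a VASS with transition set `T`. -/
def Reach {Q : Type} {d : ℕ} (T : Set (VTrans Q d)) : Conf Q d → Conf Q d → Prop :=
  Relation.ReflTransGen (Step T)

/-- Adding a nonnegative vector to a configuration. -/
def confAdd {Q : Type} {d : ℕ} (c : Conf Q d) (δ : Fin d → ℕ) : Conf Q d :=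
  (c.1, c.2 + δ)

section Helpers

open Relation

variable {Q : Type} {d : ℕ} {T : Set (VTrans Q d)}

lemma confAdd_zero (c : Conf Q d) : confAdd c 0 = c := by
  simp [confAdd]

lemma confAdd_add (c : Conf Q d) (u v : Fin d → ℕ) :
    confAdd c (u + v) = confAdd (confAdd c u) v := by
  simp [confAdd, add_assoc]

lemma step_shift {c c' : Conf Q d} (v : Fin d → ℕ) (h : Step T c c') :
    Step T (confAdd c v) (confAdd c' v) := by
  obtain ⟨t, ht, h1, h2, h3⟩ := h
  refine ⟨t, ht, h1, h2, fun i => ?_⟩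
  have := h3 i
  simp only [confAdd, Pi.add_apply]
  push_cast
  omega

lemma reach_shift {c c' : Conf Q d} (v : Fin d → ℕ) (h : Reach T c c') :
    Reach T (confAdd c v) (confAdd c' v) := by
  induction h with
  | refl => exact Relation.ReflTransGen.refl
  | tail _ hstep ih => exact Relation.ReflTransGen.tail ih (step_shift v hstep)

lemma pump (c : Conf Q d) (u w : Fin d → ℕ)
    (h : Reach T (confAdd c u) (confAdd c w)) :
    ∀ n : ℕ, Reach T (confAdd c (n • u)) (confAdd c (n • w)) := by
  intro n
  induction n with
  | zero => rw [zero_smul, zero_smul]; exact Relation.ReflTransGen.refl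
  | succ n ih =>
    have h1 : Reach T (confAdd c (u + n • u)) (confAdd c (w + n • u)) := by
      rw [confAdd_add, confAdd_add]; exact reach_shift _ h
    have h2 : Reach T (confAdd c (w + n • u)) (confAdd c (w + n • w)) := by
      rw [add_comm w (n • u), add_comm w (n • w), confAdd_add, confAdd_add]
      exact reach_shift _ ih
    have h3 := Relation.ReflTransGen.trans h1 h2
    rwa [succ_nsmul, succ_nsmul, add_comm (n • u) u, add_comm (n • w) w]

lemma step_of_valid {m : AncTrans Q d} (h : ValidAnc T m) : Step T m.1 m.2.2 :=
  ⟨m.2.1, h.1, h.2.1, h.2.2.1, h.2.2.2⟩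

lemma reach_between (ρ : Run Q d T) :
    ∀ (b : ℕ) (hb : b < ρ.len) (a : ℕ) (ha : a ≤ b),
      Reach T ((ρ.m ⟨a, by omega⟩).1) ((ρ.m ⟨b, hb⟩).1) := by
  intro b
  induction b with
  | zero =>
    intro hb a ha
    have : a = 0 := by omega
    subst this
    exact Relation.ReflTransGen.refl
  | succ b ih =>
    intro hb a ha
    rcases Nat.lt_or_ge a (b + 1) with hlt | hge
    · have hb' : b < ρ.len := by omega
      have r1 := ih hb' a (by omega)
      have s := step_of_valid (ρ.valid ⟨b, hb'⟩)
      rw [ρ.chain ⟨b, hb'⟩ hb] at s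
      exact Relation.ReflTransGen.tail r1 s
    · have : a = b + 1 := by omega
      subst this
      exact Relation.ReflTransGen.refl

lemma exists_run_step {c c' : Conf Q d} (h : Step T c c') :
    ∃ ρ : Run Q d T, ρ.src = c ∧ ρ.trg = c' := by
  obtain ⟨t, ht, h1, h2, h3⟩ := h
  exact ⟨⟨1, one_pos, fun _ => (c, t, c'), fun _ => ⟨ht, h1, h2, h3⟩,
    fun i hi => by omega⟩, rfl, rfl⟩

lemma exists_run_cons {c b : Conf Q d} (h : Step T c b) (ρ : Run Q d T) (hb : ρ.src = b) :
    ∃ σ : Run Q d T, σ.src = c ∧ σ.trg = ρ.trg := by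
  obtain ⟨t, ht, h1, h2, h3⟩ := h
  have hpos := ρ.pos
  refine ⟨⟨ρ.len + 1, by omega, Fin.cases ((c, t, b) : AncTrans Q d) ρ.m, ?_, ?_⟩, ?_, ?_⟩
  · intro i
    induction i using Fin.cases with
    | zero => exact (⟨ht, h1, h2, h3⟩ : ValidAnc T ((c, t, b) : AncTrans Q d))
    | succ i => simpa using ρ.valid i
  · intro i hchain
    induction i using Fin.cases with
    | zero =>
      have hidx : (⟨(0 : Fin (ρ.len + 1)).1 + 1, hchain⟩ : Fin (ρ.len + 1))
          = Fin.succ ⟨0, hpos⟩ := Fin.ext (by simp)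
      rw [hidx]
      simp only [Fin.cases_zero, Fin.cases_succ]
      rw [← hb]; rfl
    | succ i =>
      have h' : i.1 + 1 < ρ.len := by
        have : (Fin.succ i).1 = i.1 + 1 := rfl
        omega
      have hidx : (⟨(Fin.succ i).1 + 1, hchain⟩ : Fin (ρ.len + 1))
          = Fin.succ ⟨i.1 + 1, h'⟩ := Fin.ext (by simp)
      rw [hidx]
      simp only [Fin.cases_succ]
      exact ρ.chain i h'
  · show (Fin.cases (motive := fun _ => AncTrans Q d) ((c, t, b) : AncTrans Q d) ρ.m ⟨0, by omega⟩).1 = c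
    have hidx : (⟨0, by omega⟩ : Fin (ρ.len + 1)) = 0 := Fin.ext (by simp)
    rw [hidx, Fin.cases_zero]
  · show (Fin.cases (motive := fun _ => AncTrans Q d) ((c, t, b) : AncTrans Q d) ρ.m ⟨ρ.len + 1 - 1, by omega⟩).2.2 = ρ.trg
    have hidx : (⟨ρ.len + 1 - 1, by omega⟩ : Fin (ρ.len + 1))
        = Fin.succ ⟨ρ.len - 1, by omega⟩ := Fin.ext (by simp; omega)
    rw [hidx, Fin.cases_succ]
    rfl

lemma exists_run_of_transGen {c c' : Conf Q d} (h : Relation.TransGen (Step T) c c') :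
    ∃ ρ : Run Q d T, ρ.src = c ∧ ρ.trg = c' := by
  induction h using Relation.TransGen.head_induction_on with
  | single hstep => exact exists_run_step hstep
  | head hstep _ ih =>
    obtain ⟨ρ, h1, h2⟩ := ih
    obtain ⟨σ, hs, ht⟩ := exists_run_cons hstep ρ h1
    exact ⟨σ, hs, ht.trans h2⟩

lemma key_pump (ρ ρ' : Run Q d T) (f : Fin ρ.len → Fin ρ'.len)
    (hf : StrictMono f) (hd : ∀ j, AncLe (ρ.m j) (ρ'.m (f j)))
    (hs : ρ'.src = ρ.src) :
    ∀ (j : Fin ρ.len) (n : ℕ),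
      Relation.TransGen (Step T) ρ.src
        (confAdd ((ρ.m j).2.2) (n • fun i => (ρ'.m (f j)).2.2.2 i - (ρ.m j).2.2.2 i)) := by
  -- surplus facts
  have htgtEq : ∀ (j : Fin ρ.len),
      (ρ'.m (f j)).2.2 = confAdd ((ρ.m j).2.2)
        (fun i => (ρ'.m (f j)).2.2.2 i - (ρ.m j).2.2.2 i) := by
    intro j
    obtain ⟨-, -, hq, hv⟩ := hd j
    refine Prod.ext hq.symm (funext fun i => ?_)
    have hle : (ρ.m j).2.2.2 i ≤ (ρ'.m (f j)).2.2.2 i := hv i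
    show (ρ'.m (f j)).2.2.2 i
      = (ρ.m j).2.2.2 i + ((ρ'.m (f j)).2.2.2 i - (ρ.m j).2.2.2 i)
    omega
  have hsrcEq : ∀ (j : Fin ρ.len),
      (ρ'.m (f j)).1 = confAdd ((ρ.m j).1)
        (fun i => (ρ'.m (f j)).2.2.2 i - (ρ.m j).2.2.2 i) := by
    intro j
    obtain ⟨heq, ⟨hq1, hv1⟩, ⟨hq2, hv2⟩⟩ := hd j
    have v := ρ.valid j
    have v' := ρ'.valid (f j)
    refine Prod.ext ?_ (funext fun i => ?_)
    · show (ρ'.m (f j)).1.1 = (ρ.m j).1.1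
      rw [v'.2.1, v.2.1, heq]
    · have e1 := v.2.2.2 i
      have e2 := v'.2.2.2 i
      rw [← heq] at e2
      have l1 : (ρ.m j).1.2 i ≤ (ρ'.m (f j)).1.2 i := hv1 i
      have l2 : (ρ.m j).2.2.2 i ≤ (ρ'.m (f j)).2.2.2 i := hv2 i
      show (ρ'.m (f j)).1.2 i
        = (ρ.m j).1.2 i + ((ρ'.m (f j)).2.2.2 i - (ρ.m j).2.2.2 i)
      omega
  rintro ⟨j, hj⟩
  induction j with
  | zero =>
    intro n
    -- prefix of ρ' reaching the first matched source
    have r0 : Reach T ρ'.src ((ρ'.m (f ⟨0, hj⟩)).1) := by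
      have := reach_between ρ' (f ⟨0, hj⟩).1 (f ⟨0, hj⟩).2 0 (Nat.zero_le _)
      have hfin : (⟨(f ⟨0, hj⟩).1, (f ⟨0, hj⟩).2⟩ : Fin ρ'.len) = f ⟨0, hj⟩ := rfl
      rw [hfin] at this
      exact this
    rw [hs, hsrcEq ⟨0, hj⟩] at r0
    have hsrc0 : ρ.src = (ρ.m ⟨0, hj⟩).1 := rfl
    rw [hsrc0] at r0 ⊢
    -- pump the initial cycle
    have r0' : Reach T (confAdd ((ρ.m ⟨0, hj⟩).1) 0)
        (confAdd ((ρ.m ⟨0, hj⟩).1) (fun i => (ρ'.m (f ⟨0, hj⟩)).2.2.2 i - (ρ.m ⟨0, hj⟩).2.2.2 i)) := by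
      rwa [confAdd_zero]
    have rp := pump _ _ _ r0' n
    rw [smul_zero, confAdd_zero] at rp
    have s := step_of_valid (ρ.valid ⟨0, hj⟩)
    have s' := step_shift (n • fun i => (ρ'.m (f ⟨0, hj⟩)).2.2.2 i - (ρ.m ⟨0, hj⟩).2.2.2 i) s
    exact Relation.TransGen.tail' (Relation.ReflTransGen.trans (Relation.ReflTransGen.refl) rp) s'
  | succ j ihj =>
    intro n
    have hj' : j < ρ.len := by omega
    have IH := ihj hj' n
    -- the cycle in ρ' between matched positions f j and f (j+1)
    set p := f ⟨j, hj'⟩ with hp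
    set q := f ⟨j + 1, hj⟩ with hq
    have hpq : p < q := hf (by simp [Fin.lt_def])
    have hp1 : p.1 + 1 < ρ'.len := by
      have := q.2; have := hpq; omega
    have rc : Reach T ((ρ'.m p).2.2) ((ρ'.m q).1) := by
      have ch := ρ'.chain p (by omega)
      have hr := reach_between ρ' q.1 q.2 (p.1 + 1) (by exact_mod_cast hpq)
      have hfin : (⟨q.1, q.2⟩ : Fin ρ'.len) = q := rfl
      rw [hfin] at hr
      have hfin2 : (⟨p.1, p.2⟩ : Fin ρ'.len) = p := rfl
      rw [show (ρ'.m p).2.2 = (ρ'.m ⟨p.1 + 1, by omega⟩).1 from ch]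
      exact hr
    rw [htgtEq ⟨j, hj'⟩, hsrcEq ⟨j + 1, hj⟩] at rc
    have hchain : (ρ.m ⟨j, hj'⟩).2.2 = (ρ.m ⟨j + 1, hj⟩).1 := ρ.chain ⟨j, hj'⟩ hj
    rw [← hchain] at rc
    -- pump the cycle
    have rp := pump _ _ _ rc n
    -- combine
    have comb := Relation.TransGen.trans_left IH rp
    rw [hchain] at comb
    have s := step_of_valid (ρ.valid ⟨j + 1, hj⟩)
    have s' := step_shift (n • fun i => (ρ'.m (f ⟨j + 1, hj⟩)).2.2.2 i - (ρ.m ⟨j + 1, hj⟩).2.2.2 i) s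
    exact Relation.TransGen.tail comb s'

end Helpers

/-- Pumping: a dominating run with target surplus δ can be iterated n times. -/
theorem stmt_7 {Q : Type} {d : ℕ} {T : Set (VTrans Q d)}
    (ρ ρ' : Run Q d T) (h : RunEmbed ρ ρ')
    (hs : ρ'.src = ρ.src) (δ : Fin d → ℕ) (ht : ρ'.trg = confAdd ρ.trg δ) :
    ∀ n : ℕ, ∃ ρₙ : Run Q d T, ρₙ.src = ρ.src ∧ ρₙ.trg = confAdd ρ.trg (n • δ) := by
  obtain ⟨f, hf, hlast, hd⟩ := h
  intro n
  have hpos := ρ.pos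
  have hpos' := ρ'.pos
  set jl : Fin ρ.len := ⟨ρ.len - 1, by omega⟩ with hjl
  have key := key_pump ρ ρ' f hf hd hs jl n
  have hlastidx : f jl = ⟨ρ'.len - 1, by omega⟩ := by
    apply Fin.ext
    exact hlast
  have h2 : (ρ.m jl).2.2 = ρ.trg := rfl
  have hDδ : (fun i => (ρ'.m (f jl)).2.2.2 i - (ρ.m jl).2.2.2 i) = δ := by
    funext i
    have h1 : (ρ'.m (f jl)).2.2 = ρ'.trg := by rw [hlastidx]; rfl
    rw [show (ρ'.m (f jl)).2.2 = confAdd ρ.trg δ from h1.trans ht, h2]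
    simp [confAdd]
  rw [hDδ] at key
  have key' : Relation.TransGen (Step T) ρ.src (confAdd ρ.trg (n • δ)) := key
  exact exists_run_of_transGen key'
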